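/- Let Vec = ℂ[∂]·l be the Lie* algebra with μ_0(l,l) = ∂l, μ_1(l,l) = 2l, μ_n(l,l) = 0 for n ≥ 2 (extended by sesquilinearity). Form h(Vec ⊗ ℂ[t]) := (Vec ⊗ ℂ[t]) / Im(∂ ⊗ 1 + 1 ⊗ d/dt), with the Lie bracket [a_[n], b_[m]] = Σ_{j≥0} C(n,j)·(μ_j(a,b))_[n+m−j] (a_[n] the class of a ⊗ tⁿ, n ≥ 0). Then the ℂ-linear map determined by ∂^k l ⊗ p(t) ↦ (−1)^{k+1} p^{(k)}(t)·d/dt (in particular l ⊗ tⁿ ↦ −tⁿ·d/dt) is well-defined on h(Vec ⊗ ℂ[t]) and is a Lie algebra isomorphism onto Der_ℂ(ℂ[t]), the Lie algebra of ℂ-linear derivations of the polynomial ring ℂ[t]. -/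

import Mathlib

/-- The free rank-one `ℂ[∂]`-module `Vec = ℂ[∂]·l`, modelled as `Polynomial ℂ`
(the generator `l` is `1`, and `∂` acts as multiplication by the variableX). -/
noncomputable def vecD : Polynomial ℂ →ₗ[ℂ] Polynomial ℂ :=
  LinearMap.mulLeft ℂ (Polynomial.X : Polynomial ℂ)

/-- Defining conditions on the `μ_n` of `Vec`: sesquilinearity and
`μ₀(l,l) = ∂l`, `μ₁(l,l) = 2l`, `μ_n(l,l) = 0` for `n ≥ 2`. -/
def VirCond (mu : ℕ → Polynomial ℂ →ₗ[ℂ] Polynomial ℂ →ₗ[ℂ] Polynomial ℂ) : Prop :=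
  (∀ (n : ℕ) (a b : Polynomial ℂ), mu n (vecD a) b = (-(n : ℂ)) • mu (n - 1) a b) ∧
  (∀ (n : ℕ) (a b : Polynomial ℂ),
      mu n a (vecD b) = vecD (mu n a b) + (n : ℂ) • mu (n - 1) a b) ∧
  (mu 0 1 1 = Polynomial.X) ∧
  (mu 1 1 1 = 2) ∧
  (∀ n : ℕ, 2 ≤ n → mu n 1 1 = 0)

/-- The operator `∂ ⊗ 1 + 1 ⊗ d/dt` on `Vec ⊗ ℂ[t]`, realized on the model
`ℕ →₀ Polynomial ℂ` in which `a ⊗ tⁿ` is `Finsupp.single n a`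
(so `a ⊗ tⁿ ↦ ∂a ⊗ tⁿ + n·a ⊗ tⁿ⁻¹`). -/
noncomputable def vecTop : (ℕ →₀ Polynomial ℂ) →ₗ[ℂ] (ℕ →₀ Polynomial ℂ) :=
  Finsupp.lsum ℂ fun n : ℕ => (Finsupp.lsingle n).comp vecD + (n : ℂ) • Finsupp.lsingle (n - 1)

/-- The class `a_[n]` of `a ⊗ tⁿ` in `h(Vec ⊗ ℂ[t]) = (Vec ⊗ ℂ[t]) / Im(∂⊗1 + 1⊗d/dt)`. -/
noncomputable def vecEl (n : ℕ) (a : Polynomial ℂ) :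
    (ℕ →₀ Polynomial ℂ) ⧸ LinearMap.range vecTop :=
  (LinearMap.range vecTop).mkQ (Finsupp.single n a)

/-- The derivation `d/dt` of the polynomial ring `ℂ[t]`. -/
noncomputable def ddt : Derivation ℂ (Polynomial ℂ) (Polynomial ℂ) where
  toLinearMap := Polynomial.derivative
  map_one_eq_zero' := by simp
  leibniz' := fun a b => by
    simp [Polynomial.derivative_mul, smul_eq_mul]
    ring

open Polynomial

local notation "QV" => (ℕ →₀ Polynomial ℂ) ⧸ LinearMap.range vecTop
local notation "DerC" => Derivation ℂ (Polynomial ℂ) (Polynomial ℂ)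

noncomputable def Dend : Module.End ℂ (Polynomial ℂ) := Polynomial.derivative

noncomputable def smulDdt : Polynomial ℂ →ₗ[ℂ] DerC where
  toFun p := p • ddt
  map_add' p q := add_smul p q ddt
  map_smul' c p := smul_assoc c p ddt

noncomputable def evalA (n : ℕ) : Polynomial ℂ →ₗ[ℂ] Polynomial ℂ :=
  -((LinearMap.applyₗ ((X : Polynomial ℂ) ^ n)).comp (Polynomial.aeval (-Dend)).toLinearMap)

noncomputable def Phi0 : (ℕ →₀ Polynomial ℂ) →ₗ[ℂ] DerC :=
  Finsupp.lsum ℂ fun n => smulDdt.comp (evalA n)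

lemma Phi0_single (n : ℕ) (a : Polynomial ℂ) :
    Phi0 (Finsupp.single n a) = (-(Polynomial.aeval (-Dend) a ((X : Polynomial ℂ) ^ n))) • ddt := by
  simp only [Phi0, Finsupp.lsum_single, LinearMap.comp_apply]
  rfl

lemma ddt_apply (p : Polynomial ℂ) : ddt p = derivative p := rfl

lemma vecTop_single (n : ℕ) (a : Polynomial ℂ) :
    vecTop (Finsupp.single n a)
      = Finsupp.single n (X * a) + (n : ℂ) • Finsupp.single (n - 1) a := by
  simp [vecTop, vecD]

lemma aeval_X_mul (n : ℕ) (a : Polynomial ℂ) :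
    Polynomial.aeval (-Dend) (X * a) ((X : Polynomial ℂ) ^ n)
      = -((n : ℂ) • Polynomial.aeval (-Dend) a ((X : Polynomial ℂ) ^ (n - 1))) := by
  rw [mul_comm, map_mul, aeval_X, Module.End.mul_apply]
  have h1 : (-Dend) ((X : Polynomial ℂ) ^ n) = -((n : ℂ) • (X : Polynomial ℂ) ^ (n - 1)) := by
    simp [Dend, derivative_X_pow, smul_eq_C_mul]
  rw [h1, map_neg, map_smul]

lemma Phi0_vecTop : Phi0.comp vecTop = 0 := by
  apply Finsupp.lhom_ext
  intro n a
  simp only [LinearMap.comp_apply, LinearMap.zero_apply]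
  rw [vecTop_single, map_add, map_smul, Phi0_single, Phi0_single, aeval_X_mul]
  rw [neg_neg, ← smul_assoc, smul_neg]
  rw [neg_smul ((n:ℂ) • (Polynomial.aeval (-Dend) a ((X : Polynomial ℂ) ^ (n-1)))) ddt]
  exact add_neg_cancel _

noncomputable def PhiQ : QV →ₗ[ℂ] DerC :=
  Submodule.liftQ _ Phi0 (by
    rintro x ⟨u, rfl⟩
    exact LinearMap.congr_fun Phi0_vecTop u)

lemma PhiQ_vecEl (n : ℕ) (a : Polynomial ℂ) :
    PhiQ (vecEl n a) = (-(Polynomial.aeval (-Dend) a ((X : Polynomial ℂ) ^ n))) • ddt := by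
  rw [vecEl, PhiQ, Submodule.mkQ_apply, Submodule.liftQ_apply, Phi0_single]

lemma PhiQ_one (k : ℕ) : PhiQ (vecEl k 1) = (-((X : Polynomial ℂ) ^ k)) • ddt := by
  rw [PhiQ_vecEl]; simp

/-- The fundamental relation in the quotient. -/
lemma vecEl_X_mul (n : ℕ) (a : Polynomial ℂ) :
    vecEl n (X * a) = (-(n : ℂ)) • vecEl (n - 1) a := by
  have h : (LinearMap.range vecTop).mkQ (vecTop (Finsupp.single n a)) = 0 := by
    rw [Submodule.mkQ_apply, Submodule.Quotient.mk_eq_zero]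
    exact ⟨_, rfl⟩
  rw [vecTop_single, map_add, map_smul] at h
  have := eq_neg_of_add_eq_zero_left h
  rw [vecEl, vecEl, this, neg_smul]

noncomputable def toFinsuppLin : Polynomial ℂ →ₗ[ℂ] (ℕ →₀ ℂ) where
  toFun p := p.toFinsupp.coeff
  map_add' p q := by rw [Polynomial.toFinsupp_add]; rfl
  map_smul' c p := by rw [Polynomial.toFinsupp_smul]; rfl

noncomputable def toQ : Polynomial ℂ →ₗ[ℂ] QV :=
  (Finsupp.lsum ℂ fun m => LinearMap.toSpanSingleton ℂ _ (vecEl m 1)).comp toFinsuppLin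

lemma toQ_monomial (m : ℕ) (c : ℂ) : toQ (monomial m c) = c • vecEl m 1 := by
  simp [toQ, toFinsuppLin, Polynomial.toFinsupp_monomial, LinearMap.toSpanSingleton]

lemma toQ_X_pow (m : ℕ) : toQ ((X : Polynomial ℂ) ^ m) = vecEl m 1 := by
  rw [X_pow_eq_monomial, toQ_monomial, one_smul]

lemma descfac (n k : ℕ) : n.descFactorial (k+1) = n * (n-1).descFactorial k := by
  cases n with
  | zero => simp
  | succ n => rw [Nat.succ_descFactorial_succ]; simp

lemma vecEl_X_pow (k n : ℕ) :
    vecEl n ((X : Polynomial ℂ) ^ k)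
      = (((-1 : ℂ) ^ k) * (n.descFactorial k : ℂ)) • vecEl (n - k) 1 := by
  induction k generalizing n with
  | zero => simp [pow_zero]
  | succ k ih =>
      have : (X : Polynomial ℂ) ^ (k+1) = X * X ^ k := by ring
      have hidx : n - 1 - k = n - (k+1) := by omega
      rw [this, vecEl_X_mul, ih (n-1), descfac, hidx, ← smul_assoc]
      congr 1
      push_cast
      simp only [smul_eq_mul]
      ring

lemma negDend_pow (k : ℕ) (p : Polynomial ℂ) :
    ((-Dend) ^ k) p = ((-1 : ℂ) ^ k) • (Polynomial.derivative^[k] p) := by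
  rw [show (-Dend) = ((-1 : ℂ) • Dend) from (neg_one_smul ℂ Dend).symm, _root_.smul_pow,
    LinearMap.smul_apply, Module.End.pow_apply]
  rfl

lemma claimC (n : ℕ) (a : Polynomial ℂ) :
    toQ (Polynomial.aeval (-Dend) a ((X : Polynomial ℂ) ^ n)) = vecEl n a := by
  have key : ∀ k : ℕ,
      toQ (Polynomial.aeval (-Dend) ((X : Polynomial ℂ) ^ k) ((X : Polynomial ℂ) ^ n))
        = vecEl n ((X : Polynomial ℂ) ^ k) := by
    intro k
    have h2 : Polynomial.aeval (-Dend) ((X : Polynomial ℂ) ^ k) = (-Dend) ^ k := by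
      rw [map_pow, aeval_X]
    rw [h2, negDend_pow, iterate_derivative_X_pow_eq_smul, vecEl_X_pow]
    rw [map_smul, map_smul, toQ_X_pow, smul_smul]
  -- both sides linear in a
  have hlin :
      (toQ.comp ((LinearMap.applyₗ ((X : Polynomial ℂ) ^ n)).comp
          (Polynomial.aeval (-Dend)).toLinearMap))
        = ((LinearMap.range vecTop).mkQ.comp (Finsupp.lsingle n)) := by
    apply Polynomial.lhom_ext'
    intro k
    apply LinearMap.ext_ring
    simp only [LinearMap.comp_apply, Finsupp.lsingle_apply]
    rw [← X_pow_eq_monomial]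
    exact key k
  exact LinearMap.congr_fun hlin a

noncomputable def atX : DerC →ₗ[ℂ] Polynomial ℂ where
  toFun d := d X
  map_add' d e := rfl
  map_smul' c d := rfl

noncomputable def PsiQ : DerC →ₗ[ℂ] QV := -(toQ.comp atX)

lemma smul_ddt_X (p : Polynomial ℂ) : (p • ddt) X = p := by
  rw [Derivation.smul_apply, ddt_apply, derivative_X, smul_eq_mul, mul_one]

lemma PsiQ_PhiQ : ∀ x, PsiQ (PhiQ x) = x := by
  intro x
  obtain ⟨u, rfl⟩ := Submodule.mkQ_surjective _ x
  induction u using Finsupp.induction_linear with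
  | zero => simp
  | add f g hf hg => rw [map_add, map_add, map_add, hf, hg]
  | single n a =>
      show PsiQ (PhiQ (vecEl n a)) = vecEl n a
      rw [PhiQ_vecEl, PsiQ]
      simp only [LinearMap.neg_apply, LinearMap.comp_apply]
      have : atX ((-(Polynomial.aeval (-Dend) a ((X : Polynomial ℂ) ^ n))) • ddt)
          = -(Polynomial.aeval (-Dend) a ((X : Polynomial ℂ) ^ n)) := smul_ddt_X _
      rw [this, map_neg, neg_neg, claimC]

lemma myDerivationExt {d1 d2 : DerC} (h : d1 X = d2 X) : d1 = d2 := by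
  apply Derivation.ext_of_adjoin_eq_top (R := ℂ) ({X} : Set (Polynomial ℂ)) Polynomial.adjoin_X
  intro x hx
  rw [Set.mem_singleton_iff] at hx
  rw [hx]; exact h

lemma PhiQ_PsiQ : ∀ d, PhiQ (PsiQ d) = d := by
  have hp : ∀ p : Polynomial ℂ, PhiQ (toQ p) = -(p • ddt) := by
    intro p
    induction p using Polynomial.induction_on' with
    | add f g hf hg => rw [map_add, map_add, hf, hg, add_smul, neg_add]
    | monomial m c =>
        rw [toQ_monomial, map_smul, PhiQ_one, ← smul_assoc, smul_neg,
          neg_smul (c • (X : Polynomial ℂ) ^ m) ddt, Polynomial.smul_X_eq_monomial]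
  intro d
  rw [PsiQ]
  simp only [LinearMap.neg_apply, LinearMap.comp_apply, map_neg]
  rw [hp]
  apply myDerivationExt
  rw [neg_neg, smul_ddt_X]
  rfl

lemma vecEl_zero (n : ℕ) : vecEl n (0 : Polynomial ℂ) = 0 := by
  rw [vecEl, Finsupp.single_zero, map_zero]

lemma vecEl_smul (n : ℕ) (c : ℂ) (a : Polynomial ℂ) :
    vecEl n (c • a) = c • vecEl n a := by
  rw [vecEl, vecEl, ← Finsupp.smul_single, map_smul]

lemma toQ_mem (p : Polynomial ℂ) :
    toQ p ∈ Submodule.span ℂ (Set.range fun k : ℕ => vecEl k 1) := by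
  induction p using Polynomial.induction_on' with
  | add f g hf hg => rw [map_add]; exact Submodule.add_mem _ hf hg
  | monomial m c =>
      rw [toQ_monomial]
      exact Submodule.smul_mem _ _ (Submodule.subset_span ⟨m, rfl⟩)

lemma spanTop : Submodule.span ℂ (Set.range fun k : ℕ => vecEl k 1) = ⊤ := by
  rw [eq_top_iff]
  intro x _
  have hx : x = PsiQ (PhiQ x) := (PsiQ_PhiQ x).symm
  rw [hx, PsiQ]
  simp only [LinearMap.neg_apply, LinearMap.comp_apply]
  exact Submodule.neg_mem _ (toQ_mem _)

noncomputable def brkt : DerC →ₗ[ℂ] DerC →ₗ[ℂ] DerC :=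
  LinearMap.mk₂ ℂ (fun d e => ⁅d, e⁆)
    (fun d e f => by ext a; simp [Derivation.commutator_apply]; ring)
    (fun c d e => by ext a; simp [Derivation.commutator_apply, smul_sub])
    (fun d e f => by ext a; simp [Derivation.commutator_apply]; ring)
    (fun c d e => by ext a; simp [Derivation.commutator_apply, smul_sub])

lemma core (mu : ℕ → Polynomial ℂ →ₗ[ℂ] Polynomial ℂ →ₗ[ℂ] Polynomial ℂ)
    (hmu : VirCond mu)
    (B : QV →ₗ[ℂ] QV →ₗ[ℂ] QV)
    (hB : ∀ (a b : Polynomial ℂ) (n m : ℕ),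
        B (vecEl n a) (vecEl m b)
          = ∑ᶠ j : ℕ, ((n.choose j : ℂ)) • vecEl (n + m - j) (mu j a b))
    (n m : ℕ) :
    PhiQ (B (vecEl n 1) (vecEl m 1)) = ⁅PhiQ (vecEl n 1), PhiQ (vecEl m 1)⁆ := by
  have hBval : B (vecEl n 1) (vecEl m 1)
      = (((n : ℂ) - m)) • vecEl (n + m - 1) 1 := by
    rw [hB 1 1 n m]
    have hsup : (Function.support fun j : ℕ =>
        ((n.choose j : ℂ)) • vecEl (n + m - j) (mu j 1 1)) ⊆ (({0, 1} : Finset ℕ) : Set ℕ) := by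
      intro j hj
      rcases Nat.lt_or_ge j 2 with h | h
      · interval_cases j <;> simp
      · refine absurd ?_ hj
        show ((n.choose j : ℂ)) • vecEl (n + m - j) (mu j 1 1) = 0
        rw [hmu.2.2.2.2 j h, vecEl_zero, smul_zero]
    rw [finsum_eq_sum_of_support_subset _ hsup]
    rw [Finset.sum_insert (by simp), Finset.sum_singleton]
    rw [hmu.2.2.1, hmu.2.2.2.1]
    have h1 : vecEl (n + m - 0) X = (-((n : ℂ) + m)) • vecEl (n + m - 1) 1 := by
      rw [Nat.sub_zero, show (X : Polynomial ℂ) = X * 1 from (mul_one X).symm, vecEl_X_mul]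
      push_cast
      ring_nf
    have h2 : vecEl (n + m - 1) (2 : Polynomial ℂ) = (2 : ℂ) • vecEl (n + m - 1) 1 := by
      rw [show (2 : Polynomial ℂ) = (2 : ℂ) • 1 by simp [Algebra.smul_def, map_ofNat], vecEl_smul]
    rw [h1, h2, Nat.choose_zero_right, Nat.choose_one_right]
    rw [smul_smul, smul_smul, ← add_smul]
    congr 1
    push_cast
    ring
  rw [hBval, map_smul, PhiQ_one, PhiQ_one, PhiQ_one]
  apply myDerivationExt
  simp only [Derivation.commutator_apply, Derivation.smul_apply, ddt_apply, derivative_X,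
    smul_eq_mul, mul_one, map_neg, derivative_neg, derivative_X_pow, smul_neg, neg_neg,
    neg_mul, mul_neg, sub_neg_eq_add]
  rcases n with _ | n <;> rcases m with _ | m
  · simp
  · rw [show 0 + (m + 1) - 1 = m from by omega]
    push_cast
    simp only [smul_eq_C_mul, map_sub, map_add, map_one, map_natCast, Nat.cast_zero, map_zero,
      C_0, pow_zero]
    ring
  · rw [show n + 1 + 0 - 1 = n from by omega]
    push_cast
    simp only [smul_eq_C_mul, map_sub, map_add, map_one, map_natCast, Nat.cast_zero, map_zero,
      C_0, pow_zero]
    ring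
  · rw [show n + 1 + (m + 1) - 1 = n + 1 + m from by omega]
    push_cast
    simp only [smul_eq_C_mul, map_sub, map_add, map_one, map_natCast]
    ring


/-- the ℂ-linear map determined by
`∂^k l ⊗ p(t) ↦ (−1)^{k+1} p^{(k)}(t)·d/dt` is well defined on `h(Vec ⊗ ℂ[t])`
(with its Borcherds bracket) and is a Lie algebra isomorphism onto `Der_ℂ(ℂ[t])`. -/
theorem stmt14
    (mu : ℕ → Polynomial ℂ →ₗ[ℂ] Polynomial ℂ →ₗ[ℂ] Polynomial ℂ)
    (hmu : VirCond mu)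
    (B : ((ℕ →₀ Polynomial ℂ) ⧸ LinearMap.range vecTop) →ₗ[ℂ]
        ((ℕ →₀ Polynomial ℂ) ⧸ LinearMap.range vecTop) →ₗ[ℂ]
        ((ℕ →₀ Polynomial ℂ) ⧸ LinearMap.range vecTop))
    (hB : ∀ (a b : Polynomial ℂ) (n m : ℕ),
        B (vecEl n a) (vecEl m b)
          = ∑ᶠ j : ℕ, ((n.choose j : ℂ)) • vecEl (n + m - j) (mu j a b)) :
    ∃ Φ : ((ℕ →₀ Polynomial ℂ) ⧸ LinearMap.range vecTop) →ₗ[ℂ]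
        Derivation ℂ (Polynomial ℂ) (Polynomial ℂ),
      (∀ k n : ℕ,
        Φ (vecEl n (Polynomial.X ^ k))
          = ((-1 : ℂ) ^ (k + 1)) •
              (((Polynomial.derivative ^ k) ((Polynomial.X : Polynomial ℂ) ^ n)) • ddt)) ∧
      Function.Bijective Φ ∧
      (∀ x y, Φ (B x y) = ⁅Φ x, Φ y⁆) := by
  refine ⟨PhiQ, ?_, ?_, ?_⟩
  · intro k n
    rw [vecEl_X_pow, map_smul, PhiQ_one]
    have hD : ((Polynomial.derivative : Module.End ℂ (Polynomial ℂ)) ^ k)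
        ((X : Polynomial ℂ) ^ n) = ((n.descFactorial k : ℂ)) • (X : Polynomial ℂ) ^ (n - k) := by
      rw [Module.End.pow_apply, iterate_derivative_X_pow_eq_smul]
    rw [hD, smul_assoc ((n.descFactorial k : ℂ)) ((X : Polynomial ℂ) ^ (n - k)) ddt,
      neg_smul ((X : Polynomial ℂ) ^ (n - k)) ddt, smul_neg, smul_smul, ← neg_smul]
    congr 1
    rw [pow_succ]
    ring
  · exact ⟨Function.LeftInverse.injective PsiQ_PhiQ,
      Function.RightInverse.surjective PhiQ_PsiQ⟩
  · have hFG : B.compr₂ PhiQ = brkt.compl₁₂ PhiQ PhiQ := by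
      apply LinearMap.ext_on spanTop
      intro x hx
      obtain ⟨n, rfl⟩ := hx
      apply LinearMap.ext_on spanTop
      intro y hy
      obtain ⟨m, rfl⟩ := hy
      simpa [LinearMap.compr₂_apply, LinearMap.compl₁₂_apply, brkt] using core mu hmu B hB n m
    intro x y
    have h := LinearMap.congr_fun (LinearMap.congr_fun hFG x) y
    simpa [LinearMap.compr₂_apply, LinearMap.compl₁₂_apply, brkt] using h
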